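/- Every geometric poset P is isomorphic (as a ranked poset) to the poset of flats of a simple matroid scheme, and this simple matroid scheme is unique up to isomorphism: if M = (S, ρ) and M' = (S', ρ') are simple matroid schemes whose posets of flats are isomorphic, then there is a poset isomorphism ψ: S → S' with ρ(x) = ρ'(ψ(x)) for all x ∈ S. -/

import Mathlib

/-- The set of minimal upper bounds of `x` and `y` (denoted `x ∨ y` in the paper). -/
def mub {S : Type*} [PartialOrder S] (x y : S) : Set S :=
  {u | x ≤ u ∧ y ≤ u ∧ ∀ v, x ≤ v → y ≤ v → v ≤ u → v = u}

/-- The set of maximal lower bounds of `x` and `y` (denoted `x ∧ y` in the paper). -/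
def mlb {S : Type*} [PartialOrder S] (x y : S) : Set S :=
  {l | l ≤ x ∧ l ≤ y ∧ ∀ m, m ≤ x → m ≤ y → l ≤ m → m = l}

/-- The set of minimal upper bounds of a subset `T`. -/
def mubSet {S : Type*} [PartialOrder S] (T : Set S) : Set S :=
  {u | (∀ t ∈ T, t ≤ u) ∧ ∀ v, (∀ t ∈ T, t ≤ v) → v ≤ u → v = u}

/-- The number of atoms below `x`, i.e. `|x|`, the rank of `x` in a simplicial poset. -/
noncomputable def natRank {S : Type*} [PartialOrder S] [OrderBot S] (x : S) : ℕ :=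
  Nat.card {a : S // IsAtom a ∧ a ≤ x}

/-- A finite bounded-below poset is simplicial if every lower interval is isomorphic to
the Boolean lattice of subsets of the set of atoms below. -/
def IsSimplicialPoset (S : Type*) [PartialOrder S] [OrderBot S] [Fintype S] : Prop :=
  ∀ x : S, Nonempty (Set.Iic x ≃o Set {a : S // IsAtom a ∧ a ≤ x})

/-- A matroid scheme: a rank function `ρ` on a finite simplicial poset `S`
satisfying (M1)–(M5). -/
structure IsMatroidScheme {S : Type*} [PartialOrder S] [OrderBot S] [Fintype S]
    (ρ : S → ℕ) : Prop where
  simplicial : IsSimplicialPoset S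
  M1 : ∀ x : S, ρ x ≤ natRank x
  M2 : ∀ ⦃x y : S⦄, x ≤ y → ρ x ≤ ρ y
  M3 : ∀ x y u l : S, u ∈ mub x y → l ∈ mlb x y → ρ u + ρ l ≤ ρ x + ρ y
  M4 : ∀ x y l : S, l ∈ mlb x y → ρ x = ρ l → (mub x y).Nonempty
  M5 : ∀ x y : S, ρ x < ρ y →
    ∃ a : S, IsAtom a ∧ a ≤ y ∧ ¬ a ≤ x ∧ (mub x a).Nonempty

/-- `cl` is the closure operator of a matroid scheme `(S, ρ)`:
`cl x` is the greatest element above `x` of the same rank. -/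
def IsClosureFun {S : Type*} [PartialOrder S] (ρ : S → ℕ) (cl : S → S) : Prop :=
  ∀ x : S, x ≤ cl x ∧ ρ (cl x) = ρ x ∧ ∀ y : S, x ≤ y → ρ y = ρ x → y ≤ cl x

/-- The bases of a matroid scheme: the maximal independent elements. -/
def Bases {S : Type*} [PartialOrder S] [OrderBot S] (ρ : S → ℕ) : Set S :=
  {x | ρ x = natRank x ∧ ∀ w, ρ w = natRank w → x ≤ w → w = x}

/-- The circuits of a matroid scheme: the minimal dependent elements. -/
def Circuits {S : Type*} [PartialOrder S] [OrderBot S] (ρ : S → ℕ) : Set S :=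
  {x | ρ x < natRank x ∧ ∀ y, ρ y < natRank y → y ≤ x → y = x}

/-- `c` is the complement `x ∖ a` of `a` in the Boolean lattice `S_{≤ x}`. -/
def IsComplementIn {S : Type*} [PartialOrder S] [OrderBot S] (c a x : S) : Prop :=
  c ≤ x ∧ a ≤ x ∧ (∀ l : S, l ≤ c → l ≤ a → l = ⊥) ∧
    (∀ u : S, u ≤ x → c ≤ u → a ≤ u → u = x)

/-- The rank of a matroid scheme: the common value of `ρ` on maximal elements
(equal to the maximum value of `ρ`). -/
noncomputable def schemeRank {S : Type*} [Fintype S] (ρ : S → ℕ) : ℕ :=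
  sSup (Set.range ρ)

/-- The Tutte polynomial of a matroid scheme, as a two-variable integer function. -/
noncomputable def tutte {S : Type*} [PartialOrder S] [OrderBot S] [Fintype S]
    (ρ : S → ℕ) (x y : ℤ) : ℤ :=
  ∑ w : S, (x - 1) ^ (schemeRank ρ - ρ w) * (y - 1) ^ (natRank w - ρ w)

/-- An element of a poset is an order-atom if it covers a global minimum. -/
def OrdAtom {P : Type*} [PartialOrder P] (a : P) : Prop :=
  ∃ b : P, (∀ z : P, b ≤ z) ∧ b ⋖ a

/-- A partial order is a geometric lattice: it is bounded below, every pair has a least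
upper bound and greatest lower bound, it is atomistic, and it is (upper) semimodular. -/
def IsGeomLatOrder (P : Type*) [PartialOrder P] : Prop :=
  (∃ b : P, ∀ x : P, b ≤ x) ∧
  (∀ x y : P, ∃ u : P, IsLUB {x, y} u) ∧
  (∀ x y : P, ∃ l : P, IsGLB {x, y} l) ∧
  (∀ x : P, IsLUB {a : P | OrdAtom a ∧ a ≤ x} x) ∧
  (∀ x y m j : P, IsGLB {x, y} m → IsLUB {x, y} j → m ⋖ x → y ⋖ j)

/-- A geometric poset: a finite bounded-below poset with rank function `rk`
satisfying (G1) and (G2). -/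
def IsGeometricPoset (P : Type*) [PartialOrder P] [OrderBot P] [Fintype P]
    (rk : P → ℕ) : Prop :=
  rk ⊥ = 0 ∧
  (∀ ⦃x y : P⦄, x ≤ y → rk x ≤ rk y) ∧
  (∀ x y : P, x ⋖ y → rk y = rk x + 1) ∧
  (∀ m : P, IsMax m → IsGeomLatOrder (Set.Iic m)) ∧
  (∀ (x : P) (A : Set P), (∀ a ∈ A, IsAtom a) →
    ∀ y ∈ mubSet A, rk x < rk y → rk y = Nat.card A →
      ∃ a ∈ A, ¬ a ≤ x ∧ ∃ w : P, x ≤ w ∧ a ≤ w)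

set_option linter.unusedSectionVars false
set_option linter.unusedVariables false
set_option maxHeartbeats 1000000

theorem Finset.exists_minimal_old {α : Type*} [Preorder α] (s : Finset α) (h : s.Nonempty) :
    ∃ m ∈ s, ∀ x ∈ s, ¬x < m := by
  obtain ⟨m, hm⟩ := Finset.exists_minimal h
  exact ⟨m, hm.1, fun x hx hlt => hlt.not_ge (hm.2 hx hlt.le)⟩

theorem Finset.exists_maximal_old {α : Type*} [Preorder α] (s : Finset α) (h : s.Nonempty) :
    ∃ m ∈ s, ∀ x ∈ s, ¬m < x := by
  obtain ⟨m, hm⟩ := Finset.exists_maximal h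
  exact ⟨m, hm.1, fun x hx hlt => hlt.not_ge (hm.2 hx hlt.le)⟩

section Helpers
variable {S : Type*} [PartialOrder S] [Fintype S]
lemma exists_mub_le {x y g : S} (hx : x ≤ g) (hy : y ≤ g) :
    ∃ u ∈ mub x y, u ≤ g := by
  classical
  obtain ⟨u, hu, hmin⟩ := Finset.exists_minimal_old
    (Finset.univ.filter (fun v => x ≤ v ∧ y ≤ v ∧ v ≤ g))
    ⟨g, by simp [hx, hy]⟩
  simp only [Finset.mem_filter, Finset.mem_univ, true_and] at hu hmin
  refine ⟨u, ⟨hu.1, hu.2.1, fun v hvx hvy hvu => ?_⟩, hu.2.2⟩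
  by_contra hne
  exact hmin v ⟨hvx, hvy, le_trans hvu hu.2.2⟩ (lt_of_le_of_ne hvu hne)

lemma exists_mlb_ge {x y w : S} (hx : w ≤ x) (hy : w ≤ y) :
    ∃ l ∈ mlb x y, w ≤ l := by
  classical
  obtain ⟨l, hl, hmax⟩ := Finset.exists_maximal_old
    (Finset.univ.filter (fun v => v ≤ x ∧ v ≤ y ∧ w ≤ v))
    ⟨w, by simp [hx, hy]⟩
  simp only [Finset.mem_filter, Finset.mem_univ, true_and] at hl hmax
  refine ⟨l, ⟨hl.1, hl.2.1, fun m hmx hmy hlm => ?_⟩, hl.2.2⟩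
  by_contra hne
  exact hmax m ⟨hmx, hmy, le_trans hl.2.2 hlm⟩ (lt_of_le_of_ne hlm (Ne.symm hne))

lemma exists_covby_le {x y : S} (h : x < y) : ∃ z, x ⋖ z ∧ z ≤ y := by
  classical
  obtain ⟨z, hz, hmin⟩ := Finset.exists_minimal_old
    (Finset.univ.filter (fun v => x < v ∧ v ≤ y)) ⟨y, by simp [h]⟩
  simp only [Finset.mem_filter, Finset.mem_univ, true_and] at hz hmin
  exact ⟨z, ⟨hz.1, fun c hxc hcz => hmin c ⟨hxc, le_trans hcz.le hz.2⟩ hcz⟩, hz.2⟩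
lemma rk_strictMono {rk : S → ℕ} (hmono : ∀ ⦃x y : S⦄, x ≤ y → rk x ≤ rk y)
    (hcov : ∀ x y : S, x ⋖ y → rk y = rk x + 1) {x y : S} (h : x < y) :
    rk x < rk y := by
  obtain ⟨z, hxz, hzy⟩ := exists_covby_le h
  have := hcov x z hxz
  have := hmono hzy
  omega

end Helpers

section BooleanInterval
variable {T : Type*} [PartialOrder T] [OrderBot T] [Fintype T]

lemma Iic_isAtom_iff {z : T} (a : Set.Iic z) : IsAtom a ↔ IsAtom a.val := by
  constructor
  · rintro ⟨hne, hmin⟩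
    refine ⟨fun h => hne (Subtype.ext h), fun b hb => ?_⟩
    have : (⟨b, le_trans hb.le a.2⟩ : Set.Iic z) < a := by
      simp only [← Subtype.coe_lt_coe]; exact hb
    have := hmin _ this
    simpa [Subtype.ext_iff] using this
  · rintro ⟨hne, hmin⟩
    refine ⟨fun h => hne (congrArg Subtype.val h), fun b hb => ?_⟩
    have : b.val < a.val := hb
    exact Subtype.ext (hmin _ this)


lemma mem_e_iff {z : T} (e : Set.Iic z ≃o Set {a : T // IsAtom a ∧ a ≤ z})
    (k : {a : T // IsAtom a ∧ a ≤ z}) (w : Set.Iic z) :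
    k ∈ e w ↔ e.symm {k} ≤ w := by
  rw [OrderIso.symm_apply_le]
  exact Set.singleton_subset_iff.symm

lemma e_symm_singleton_atom {z : T} (e : Set.Iic z ≃o Set {a : T // IsAtom a ∧ a ≤ z})
    (k : {a : T // IsAtom a ∧ a ≤ z}) : IsAtom (e.symm {k}).val :=
  (Iic_isAtom_iff _).1 ((OrderIso.isAtom_iff e.symm _).2 (Set.isAtom_iff.mpr ⟨k, rfl⟩))

variable (hsimp : IsSimplicialPoset T)

include hsimp in
/-- Inside a Boolean lower interval, order is determined by atoms below. -/
lemma bool_le {x y z : T} (hx : x ≤ z) (hy : y ≤ z)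
    (h : ∀ a : T, IsAtom a → a ≤ x → a ≤ y) : x ≤ y := by
  obtain ⟨e⟩ := hsimp z
  have key : e ⟨x, hx⟩ ≤ e ⟨y, hy⟩ := by
    intro k hk
    have h1 : e.symm {k} ≤ (⟨x, hx⟩ : Set.Iic z) := (mem_e_iff e k _).1 hk
    have h2 : (e.symm {k}).val ≤ y := h _ (e_symm_singleton_atom e k) h1
    exact (mem_e_iff e k _).2 h2
  exact Subtype.coe_le_coe.mpr (e.le_iff_le.1 key)

include hsimp in
lemma bool_eq {x y z : T} (hx : x ≤ z) (hy : y ≤ z)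
    (h : ∀ a : T, IsAtom a → (a ≤ x ↔ a ≤ y)) : x = y :=
  le_antisymm (bool_le hsimp hx hy (fun a ha hax => (h a ha).1 hax))
    (bool_le hsimp hy hx (fun a ha hay => (h a ha).2 hay))

include hsimp in
/-- Any set of atoms below `z` is the atom set of some element below `z`. -/
lemma bool_surj {z : T} (Sset : Set T) (hS : ∀ s ∈ Sset, IsAtom s ∧ s ≤ z) :
    ∃ x, x ≤ z ∧ ∀ a : T, IsAtom a → (a ≤ x ↔ a ∈ Sset) := by
  obtain ⟨e⟩ := hsimp z
  set Kset : Set {a : T // IsAtom a ∧ a ≤ z} := {k | (e.symm {k}).val ∈ Sset} with hKset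
  refine ⟨(e.symm Kset).val, (e.symm Kset).2, fun a ha => ?_⟩
  have core : ∀ haz : a ≤ z, (a ≤ (e.symm Kset).val ↔ a ∈ Sset) := by
    intro haz
    have hatom : IsAtom (⟨a, haz⟩ : Set.Iic z) := (Iic_isAtom_iff _).2 ha
    obtain ⟨k, hk⟩ := Set.isAtom_iff.mp ((OrderIso.isAtom_iff e _).2 hatom)
    have hsymm : e.symm {k} = ⟨a, haz⟩ := by rw [← hk, e.symm_apply_apply]
    have step1 : a ≤ (e.symm Kset).val ↔ (⟨a, haz⟩ : Set.Iic z) ≤ e.symm Kset :=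
      Iff.rfl
    rw [step1, ← hsymm, ← mem_e_iff e k, e.apply_symm_apply]
    show k ∈ Kset ↔ _
    rw [hKset]
    simp only [Set.mem_setOf_eq, hsymm]
  constructor
  · intro hax
    exact (core (le_trans hax (e.symm Kset).2)).1 hax
  · intro haS
    exact (core (hS a haS).2).2 haS


end BooleanInterval

section SchemeLemmas
variable {T : Type*} [PartialOrder T] [OrderBot T] [Fintype T]
variable {ρ : T → ℕ} {cl : T → T}
variable (hM : IsMatroidScheme ρ) (hcl : IsClosureFun ρ cl)
variable (hsimple : ∀ a : T, IsAtom a → cl a = a ∧ ρ a ≠ 0)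

lemma natRank_bot : natRank (⊥ : T) = 0 := by
  have : IsEmpty {a : T // IsAtom a ∧ a ≤ ⊥} := by
    constructor
    rintro ⟨a, ha, hle⟩
    exact ha.1 (le_bot_iff.mp hle)
  haveI := this
  rw [natRank]
  exact Nat.card_of_isEmpty

include hM in
lemma rho_bot : ρ (⊥ : T) = 0 := by
  have h := hM.M1 (⊥ : T)
  rw [natRank_bot] at h
  omega

lemma natRank_atom {a : T} (ha : IsAtom a) : natRank a = 1 := by
  have : Unique {b : T // IsAtom b ∧ b ≤ a} := by
    refine ⟨⟨⟨a, ha, le_refl a⟩⟩, ?_⟩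
    rintro ⟨b, hb, hba⟩
    have : b = a := by
      rcases lt_or_eq_of_le hba with h | h
      · exact absurd (ha.2 b h) hb.1
      · exact h
    simp [this]
  haveI := this
  rw [natRank]
  exact Nat.card_unique

include hM hsimple in
lemma rho_atom {a : T} (ha : IsAtom a) : ρ a = 1 := by
  have h1 := hM.M1 a
  rw [natRank_atom ha] at h1
  have h2 := (hsimple a ha).2
  omega

lemma exists_atom_le {x : T} (h : x ≠ ⊥) : ∃ a : T, IsAtom a ∧ a ≤ x := by
  obtain ⟨z, hz, hzx⟩ := exists_covby_le (bot_lt_iff_ne_bot.mpr h)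
  exact ⟨z, bot_covBy_iff.mp hz, hzx⟩

include hM hcl hsimple in
lemma cl_bot : cl (⊥ : T) = ⊥ := by
  by_contra h
  obtain ⟨a, ha, hale⟩ := exists_atom_le h
  have h1 : ρ a ≤ ρ (cl ⊥) := hM.M2 hale
  have h2 : ρ (cl ⊥) = ρ (⊥ : T) := (hcl ⊥).2.1
  rw [h2, rho_bot hM] at h1
  rw [rho_atom hM hsimple ha] at h1
  omega

include hcl in
lemma cl_idem (x : T) : cl (cl x) = cl x := by
  apply le_antisymm
  · exact (hcl x).2.2 (cl (cl x)) (le_trans (hcl x).1 (hcl (cl x)).1)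
      (by rw [(hcl (cl x)).2.1, (hcl x).2.1])
  · exact (hcl (cl x)).1

include hM hcl in
/-- Closure is dominated by any flat above. -/
lemma cl_le_flat {x f : T} (hxf : x ≤ f) (hf : cl f = f) : cl x ≤ f := by
  obtain ⟨l, hl, hxl⟩ := exists_mlb_ge (hcl x).1 hxf
  have hrl : ρ l = ρ (cl x) := by
    have h1 : ρ x ≤ ρ l := hM.M2 hxl
    have h2 : ρ l ≤ ρ (cl x) := hM.M2 hl.1
    have h3 : ρ (cl x) = ρ x := (hcl x).2.1
    omega
  obtain ⟨u, hu⟩ := hM.M4 (cl x) f l hl hrl.symm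
  have h3 := hM.M3 (cl x) f u l hu hl
  have h4 : ρ f ≤ ρ u := hM.M2 hu.2.1
  have h5 : ρ u = ρ f := by
    have := (hcl x).2.1; omega
  have h6 : u ≤ cl f := (hcl f).2.2 u hu.2.1 (by rw [h5])
  rw [hf] at h6
  exact le_trans hu.1 h6

include hM hcl in
lemma cl_mono {x y : T} (h : x ≤ y) : cl x ≤ cl y :=
  cl_le_flat hM hcl (le_trans h (hcl y).1) (cl_idem hcl y)

include hM hcl in
/-- If a flat `g` below `cl x` contains all atoms of `x`, then `g = cl x`. -/
lemma flat_min {x g : T} (hg : cl g = g) (hgcl : g ≤ cl x)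
    (hatoms : ∀ a : T, IsAtom a → a ≤ x → a ≤ g) : g = cl x := by
  rcases Nat.lt_or_ge (ρ g) (ρ x) with hlt | hge
  · obtain ⟨a, ha, hay, hax, _⟩ := hM.M5 g x hlt
    exact absurd (hatoms a ha hay) hax
  · have h1 : ρ g ≤ ρ (cl x) := hM.M2 hgcl
    have h2 : ρ (cl x) = ρ x := (hcl x).2.1
    have h3 : ρ g = ρ (cl x) := by omega
    have h4 : cl x ≤ cl g := (hcl g).2.2 (cl x) hgcl h3.symm
    rw [hg] at h4
    exact le_antisymm hgcl h4

include hM hcl in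
/-- The rank of a flat covering another flat (in the subposet of flats) is one more. -/
lemma flat_cover_rank {f g : T} (hf : cl f = f) (hg : cl g = g) (hfg : f < g)
    (hcover : ∀ h : T, cl h = h → f ≤ h → h ≤ g → h = f ∨ h = g)
    (hsimple : ∀ a : T, IsAtom a → cl a = a ∧ ρ a ≠ 0) :
    ρ g = ρ f + 1 := by
  have hstrict : ρ f < ρ g := by
    rcases Nat.lt_or_ge (ρ f) (ρ g) with h | h
    · exact h
    · have h1 : ρ g = ρ f := le_antisymm h (hM.M2 hfg.le)
      have h2 : g ≤ cl f := (hcl f).2.2 g hfg.le h1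
      rw [hf] at h2
      exact absurd h2 (not_le_of_gt hfg)
  by_contra hne
  have hgt : ρ f + 1 < ρ g := by omega
  obtain ⟨a, ha, hag, haf, _⟩ := hM.M5 f g (by omega)
  obtain ⟨u, hu, hug⟩ := exists_mub_le (hfg.le) hag
  -- ρ u = ρ f + 1
  have hbotmlb : (⊥ : T) ∈ mlb f a := by
    refine ⟨bot_le, bot_le, fun m hmf hma _ => ?_⟩
    rcases lt_or_eq_of_le hma with h | h
    · exact ha.2 m h
    · rw [h] at hmf; exact absurd hmf haf
  have h3 := hM.M3 f a u ⊥ hu hbotmlb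
  rw [rho_bot hM, rho_atom hM hsimple ha] at h3
  have h4 : ρ f ≤ ρ u := hM.M2 hu.1
  have h5 : ρ u ≠ ρ f := by
    intro h
    have : u ≤ cl f := (hcl f).2.2 u hu.1 h
    rw [hf] at this
    exact haf (le_trans hu.2.1 this)
  have h6 : ρ u = ρ f + 1 := by omega
  -- cl u is a flat strictly between f and g
  have h7 : cl u ≤ g := cl_le_flat hM hcl hug hg
  have h8 : f ≤ cl u := le_trans hu.1 (hcl u).1
  have h9 : cl u ≠ f := fun h => haf (le_trans (le_trans hu.2.1 (hcl u).1) h.le)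
  have h10 : cl u ≠ g := by
    intro h
    have : ρ (cl u) = ρ u := (hcl u).2.1
    rw [h] at this
    omega
  rcases hcover (cl u) (cl_idem hcl u) h8 h7 with h | h
  · exact h9 h
  · exact h10 h

end SchemeLemmas

section Part2
variable {T : Type*} [PartialOrder T] [OrderBot T] [Fintype T]
variable {T' : Type*} [PartialOrder T'] [OrderBot T'] [Fintype T']
variable {ρ : T → ℕ} {cl : T → T} {ρ' : T' → ℕ} {cl' : T' → T'}

/-- The bottom flat. -/
lemma map_bot_flat (hM : IsMatroidScheme ρ) (hcl : IsClosureFun ρ cl)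
    (hs : ∀ a : T, IsAtom a → cl a = a ∧ ρ a ≠ 0)
    (hM' : IsMatroidScheme ρ') (hcl' : IsClosureFun ρ' cl')
    (hs' : ∀ a : T', IsAtom a → cl' a = a ∧ ρ' a ≠ 0)
    (e : {x : T // cl x = x} ≃o {x : T' // cl' x = x}) :
    e ⟨⊥, cl_bot hM hcl hs⟩ = ⟨⊥, cl_bot hM' hcl' hs'⟩ := by
  apply le_antisymm
  · have : (⟨⊥, cl_bot hM hcl hs⟩ : {x : T // cl x = x}) ≤
        e.symm ⟨⊥, cl_bot hM' hcl' hs'⟩ := bot_le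
    have h2 := e.monotone this
    rwa [e.apply_symm_apply] at h2
  · exact Subtype.coe_le_coe.mp bot_le

/-- Transport of atoms along a flat-poset isomorphism. -/
lemma atom_transport (hM : IsMatroidScheme ρ) (hcl : IsClosureFun ρ cl)
    (hs : ∀ a : T, IsAtom a → cl a = a ∧ ρ a ≠ 0)
    (hM' : IsMatroidScheme ρ') (hcl' : IsClosureFun ρ' cl')
    (hs' : ∀ a : T', IsAtom a → cl' a = a ∧ ρ' a ≠ 0)
    (e : {x : T // cl x = x} ≃o {x : T' // cl' x = x})
    {a : T} (ha : IsAtom a) (haf : cl a = a) :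
    IsAtom ((e ⟨a, haf⟩).val) := by
  constructor
  · intro hbot
    have h1 : e ⟨a, haf⟩ = ⟨⊥, cl_bot hM' hcl' hs'⟩ := Subtype.ext hbot
    rw [← map_bot_flat hM hcl hs hM' hcl' hs' e] at h1
    have := e.injective h1
    exact ha.1 (congrArg Subtype.val this)
  · intro c hc
    by_contra hcne
    obtain ⟨a2, ha2, ha2c⟩ := exists_atom_le hcne
    have ha2f : cl' a2 = a2 := (hs' a2 ha2).1
    have h1 : (⟨a2, ha2f⟩ : {x : T' // cl' x = x}) < e ⟨a, haf⟩ := by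
      rw [← Subtype.coe_lt_coe]
      exact lt_of_le_of_lt ha2c hc
    have h2 : e.symm ⟨a2, ha2f⟩ < ⟨a, haf⟩ := by
      have := e.symm.strictMono h1
      rwa [e.symm_apply_apply] at this
    have h3 : (e.symm ⟨a2, ha2f⟩).val < a := h2
    have h4 : (e.symm ⟨a2, ha2f⟩).val = ⊥ := ha.2 _ h3
    have h5 : e.symm ⟨a2, ha2f⟩ = ⟨⊥, cl_bot hM hcl hs⟩ := Subtype.ext h4
    have h6 : (⟨a2, ha2f⟩ : {x : T' // cl' x = x}) = ⟨⊥, cl_bot hM' hcl' hs'⟩ := by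
      have := congrArg e h5
      rwa [e.apply_symm_apply, map_bot_flat hM hcl hs hM' hcl' hs' e] at this
    exact ha2.1 (congrArg Subtype.val h6)

/-- Transport of ranks of flats along a flat-poset isomorphism. -/
lemma rank_flat_transport (hM : IsMatroidScheme ρ) (hcl : IsClosureFun ρ cl)
    (hs : ∀ a : T, IsAtom a → cl a = a ∧ ρ a ≠ 0)
    (hM' : IsMatroidScheme ρ') (hcl' : IsClosureFun ρ' cl')
    (hs' : ∀ a : T', IsAtom a → cl' a = a ∧ ρ' a ≠ 0)
    (e : {x : T // cl x = x} ≃o {x : T' // cl' x = x})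
    (f : {x : T // cl x = x}) : ρ f.val = ρ' (e f).val := by
  classical
  letI : Fintype {x : T // cl x = x} := Fintype.ofFinite _
  suffices h : ∀ (n : ℕ) (f : {x : T // cl x = x}), ρ f.val ≤ n → ρ f.val = ρ' (e f).val by
    exact h (ρ f.val) f le_rfl
  intro n
  induction n with
  | zero =>
    intro f hf
    have h0 : ρ f.val = 0 := Nat.le_zero.mp hf
    have h1 : f.val ≤ cl ⊥ := (hcl ⊥).2.2 f.val bot_le (by rw [h0, rho_bot hM])
    rw [cl_bot hM hcl hs] at h1
    have h2 : f = ⟨⊥, cl_bot hM hcl hs⟩ := Subtype.ext (le_bot_iff.mp h1)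
    rw [h2, map_bot_flat hM hcl hs hM' hcl' hs' e]
    simp only [h0]
    rw [h2] at h0
    simp only at h0
    rw [rho_bot hM'] 
    omega
  | succ n ih =>
    intro f hf
    rcases Nat.lt_or_ge (ρ f.val) (n + 1) with h | h
    · exact ih f (by omega)
    · have hρf : ρ f.val = n + 1 := by omega
      have hfne : f ≠ ⟨⊥, cl_bot hM hcl hs⟩ := by
        intro hh
        rw [hh] at hρf
        simp only at hρf
        rw [rho_bot hM] at hρf
        omega
      -- find a maximal flat strictly below f
      have hlt : (⟨⊥, cl_bot hM hcl hs⟩ : {x : T // cl x = x}) < f :=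
        lt_of_le_of_ne (Subtype.coe_le_coe.mp bot_le) (Ne.symm hfne)
      obtain ⟨g, hg, hgmax⟩ := Finset.exists_maximal_old
        (Finset.univ.filter (fun h : {x : T // cl x = x} => h < f))
        ⟨⟨⊥, cl_bot hM hcl hs⟩, by simp [hlt]⟩
      simp only [Finset.mem_filter, Finset.mem_univ, true_and] at hg hgmax
      have hcover : ∀ h : T, cl h = h → g.val ≤ h → h ≤ f.val → h = g.val ∨ h = f.val := by
        intro h hhf hgh hhf2
        by_cases hhef : (⟨h, hhf⟩ : {x : T // cl x = x}) = f
        · right; exact congrArg Subtype.val hhef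
        · left
          have h1 : (⟨h, hhf⟩ : {x : T // cl x = x}) < f :=
            lt_of_le_of_ne hhf2 hhef
          have h2 := hgmax _ h1
          have h3 : ¬ g < ⟨h, hhf⟩ := h2
          have h4 : g ≤ ⟨h, hhf⟩ := Subtype.coe_le_coe.mp hgh
          exact congrArg Subtype.val (eq_of_le_of_not_lt h4 h3).symm
      have hglt : g.val < f.val := Subtype.coe_lt_coe.mpr hg
      have hrk : ρ f.val = ρ g.val + 1 :=
        flat_cover_rank hM hcl g.2 f.2 hglt hcover hs
      have hIH : ρ g.val = ρ' (e g).val := ih g (by omega)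
      -- covering in the image
      have hcover' : ∀ h : T', cl' h = h → (e g).val ≤ h → h ≤ (e f).val →
          h = (e g).val ∨ h = (e f).val := by
        intro h hhf hgh hhf2
        have h1 : e g ≤ ⟨h, hhf⟩ := Subtype.coe_le_coe.mp hgh
        have h2 : (⟨h, hhf⟩ : {x : T' // cl' x = x}) ≤ e f := Subtype.coe_le_coe.mp hhf2
        have h3 : g ≤ e.symm ⟨h, hhf⟩ := by
          have := e.symm.monotone h1; rwa [e.symm_apply_apply] at this
        have h4 : e.symm ⟨h, hhf⟩ ≤ f := by
          have := e.symm.monotone h2; rwa [e.symm_apply_apply] at this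
        rcases hcover (e.symm ⟨h, hhf⟩).val (e.symm ⟨h, hhf⟩).2
            (Subtype.coe_le_coe.mpr h3) (Subtype.coe_le_coe.mpr h4) with h5 | h5
        · left
          have h6 : e.symm ⟨h, hhf⟩ = g := Subtype.ext h5
          have := congrArg e h6
          rw [e.apply_symm_apply] at this
          exact (congrArg Subtype.val this).symm ▸ rfl
        · right
          have h6 : e.symm ⟨h, hhf⟩ = f := Subtype.ext h5
          have := congrArg e h6
          rw [e.apply_symm_apply] at this
          exact (congrArg Subtype.val this).symm ▸ rfl
      have hglt' : (e g).val < (e f).val := Subtype.coe_lt_coe.mpr (e.strictMono hg)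
      have hrk' : ρ' (e f).val = ρ' (e g).val + 1 :=
        flat_cover_rank hM' hcl' (e g).2 (e f).2 hglt' hcover' hs'
      omega

lemma psi_exists (hM : IsMatroidScheme ρ) (hcl : IsClosureFun ρ cl)
    (hs : ∀ a : T, IsAtom a → cl a = a ∧ ρ a ≠ 0)
    (hM' : IsMatroidScheme ρ') (hcl' : IsClosureFun ρ' cl')
    (hs' : ∀ a : T', IsAtom a → cl' a = a ∧ ρ' a ≠ 0)
    (e : {x : T // cl x = x} ≃o {x : T' // cl' x = x}) :
    ∃ ψ : T → T', ∀ x : T,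
      (∀ b : T', IsAtom b → (b ≤ ψ x ↔
        ∃ (a : T) (ha : IsAtom a), a ≤ x ∧ b = (e ⟨a, (hs a ha).1⟩).val)) ∧
      cl' (ψ x) = (e ⟨cl x, cl_idem hcl x⟩).val := by
  have key : ∀ x : T, ∃ y : T',
      (∀ b : T', IsAtom b → (b ≤ y ↔
        ∃ (a : T) (ha : IsAtom a), a ≤ x ∧ b = (e ⟨a, (hs a ha).1⟩).val)) ∧
      cl' y = (e ⟨cl x, cl_idem hcl x⟩).val := by
    intro x
    set fx : {x : T // cl x = x} := ⟨cl x, cl_idem hcl x⟩ with hfx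
    set z : T' := (e fx).val with hz
    set Sset : Set T' :=
      {b | ∃ (a : T) (ha : IsAtom a), a ≤ x ∧ b = (e ⟨a, (hs a ha).1⟩).val} with hSset
    have hS : ∀ s ∈ Sset, IsAtom s ∧ s ≤ z := by
      rintro s ⟨a, ha, hax, rfl⟩
      refine ⟨atom_transport hM hcl hs hM' hcl' hs' e ha (hs a ha).1, ?_⟩
      have h1 : (⟨a, (hs a ha).1⟩ : {x : T // cl x = x}) ≤ fx :=
        Subtype.coe_le_coe.mp (le_trans hax (hcl x).1)
      exact Subtype.coe_le_coe.mpr (e.monotone h1)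
    obtain ⟨y, hyz, hychar⟩ := bool_surj hM'.simplicial Sset hS
    refine ⟨y, hychar, ?_⟩
    -- cl' y = z
    have h1 : cl' y ≤ z := cl_le_flat hM' hcl' hyz (e fx).2
    set g' : {x : T' // cl' x = x} := ⟨cl' y, cl_idem hcl' y⟩ with hg'
    set g : {x : T // cl x = x} := e.symm g' with hgdef
    have hgcl : g.val ≤ cl x := by
      have h2 : g' ≤ e fx := Subtype.coe_le_coe.mp h1
      have h3 : e.symm g' ≤ fx := by
        have := e.symm.monotone h2; rwa [e.symm_apply_apply] at this
      exact Subtype.coe_le_coe.mpr h3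
    have hatoms : ∀ a : T, IsAtom a → a ≤ x → a ≤ g.val := by
      intro a ha hax
      have hb : (e ⟨a, (hs a ha).1⟩).val ∈ Sset := ⟨a, ha, hax, rfl⟩
      have hbatom : IsAtom ((e ⟨a, (hs a ha).1⟩).val) :=
        atom_transport hM hcl hs hM' hcl' hs' e ha (hs a ha).1
      have hby : (e ⟨a, (hs a ha).1⟩).val ≤ y := (hychar _ hbatom).2 hb
      have h4 : e ⟨a, (hs a ha).1⟩ ≤ g' :=
        Subtype.coe_le_coe.mp (le_trans hby (hcl' y).1)
      have h5 : (⟨a, (hs a ha).1⟩ : {x : T // cl x = x}) ≤ e.symm g' := by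
        have := e.symm.monotone h4; rwa [e.symm_apply_apply] at this
      exact Subtype.coe_le_coe.mpr h5
    have h6 : g.val = cl x := flat_min hM hcl g.2 hgcl hatoms
    have h7 : g = fx := Subtype.ext h6
    have h8 : g' = e fx := by
      rw [← e.apply_symm_apply g', ← hgdef, h7]
    have := congrArg Subtype.val h8
    exact this
  choose ψ hψ using key
  exact ⟨ψ, hψ⟩

lemma psi_mono (hM : IsMatroidScheme ρ) (hcl : IsClosureFun ρ cl)
    (hs : ∀ a : T, IsAtom a → cl a = a ∧ ρ a ≠ 0)
    (hM' : IsMatroidScheme ρ') (hcl' : IsClosureFun ρ' cl')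
    (hs' : ∀ a : T', IsAtom a → cl' a = a ∧ ρ' a ≠ 0)
    (e : {x : T // cl x = x} ≃o {x : T' // cl' x = x}) (ψ : T → T')
    (hψ : ∀ x : T,
      (∀ b : T', IsAtom b → (b ≤ ψ x ↔
        ∃ (a : T) (ha : IsAtom a), a ≤ x ∧ b = (e ⟨a, (hs a ha).1⟩).val)) ∧
      cl' (ψ x) = (e ⟨cl x, cl_idem hcl x⟩).val) :
    Monotone ψ := by
  intro x x2 h
  have hz2 : ψ x2 ≤ (e ⟨cl x2, cl_idem hcl x2⟩).val := by
    rw [← (hψ x2).2]; exact (hcl' (ψ x2)).1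
  have hz1 : ψ x ≤ (e ⟨cl x2, cl_idem hcl x2⟩).val := by
    have h1 : ψ x ≤ (e ⟨cl x, cl_idem hcl x⟩).val := by
      rw [← (hψ x).2]; exact (hcl' (ψ x)).1
    have h2 : (⟨cl x, cl_idem hcl x⟩ : {x : T // cl x = x}) ≤
        ⟨cl x2, cl_idem hcl x2⟩ := Subtype.coe_le_coe.mp (cl_mono hM hcl h)
    exact le_trans h1 (Subtype.coe_le_coe.mpr (e.monotone h2))
  refine bool_le hM'.simplicial hz1 hz2 ?_
  intro b hb hbx
  obtain ⟨a, ha, hax, rfl⟩ := ((hψ x).1 b hb).1 hbx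
  exact ((hψ x2).1 _ hb).2 ⟨a, ha, le_trans hax h, rfl⟩

lemma psi_inv (hM : IsMatroidScheme ρ) (hcl : IsClosureFun ρ cl)
    (hs : ∀ a : T, IsAtom a → cl a = a ∧ ρ a ≠ 0)
    (hM' : IsMatroidScheme ρ') (hcl' : IsClosureFun ρ' cl')
    (hs' : ∀ a : T', IsAtom a → cl' a = a ∧ ρ' a ≠ 0)
    (e₁ : {x : T // cl x = x} ≃o {x : T' // cl' x = x})
    (e₂ : {x : T' // cl' x = x} ≃o {x : T // cl x = x})
    (hcomp : ∀ f : {x : T // cl x = x}, e₂ (e₁ f) = f)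
    (ψ : T → T') (φ : T' → T)
    (hψ : ∀ x : T,
      (∀ b : T', IsAtom b → (b ≤ ψ x ↔
        ∃ (a : T) (ha : IsAtom a), a ≤ x ∧ b = (e₁ ⟨a, (hs a ha).1⟩).val)) ∧
      cl' (ψ x) = (e₁ ⟨cl x, cl_idem hcl x⟩).val)
    (hφ : ∀ y : T',
      (∀ b : T, IsAtom b → (b ≤ φ y ↔
        ∃ (a : T') (ha : IsAtom a), a ≤ y ∧ b = (e₂ ⟨a, (hs' a ha).1⟩).val)) ∧
      cl (φ y) = (e₂ ⟨cl' y, cl_idem hcl' y⟩).val) :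
    ∀ x : T, φ (ψ x) = x := by
  intro x
  have hmk : (⟨cl' (ψ x), cl_idem hcl' (ψ x)⟩ : {x : T' // cl' x = x}) =
      e₁ ⟨cl x, cl_idem hcl x⟩ := Subtype.ext (hψ x).2
  have hclφ : cl (φ (ψ x)) = cl x := by
    rw [(hφ (ψ x)).2, hmk, hcomp]
  have hle1 : φ (ψ x) ≤ cl x := by
    rw [← hclφ]; exact (hcl (φ (ψ x))).1
  have hle2 : x ≤ cl x := (hcl x).1
  refine bool_eq hM.simplicial hle1 hle2 ?_
  intro a ha
  constructor
  · intro h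
    obtain ⟨b, hb, hbψ, rfl⟩ := ((hφ (ψ x)).1 a ha).1 h
    obtain ⟨a2, ha2, ha2x, hbval⟩ := ((hψ x).1 b hb).1 hbψ
    have hmk2 : (⟨b, (hs' b hb).1⟩ : {x : T' // cl' x = x}) =
        e₁ ⟨a2, (hs a2 ha2).1⟩ := Subtype.ext hbval
    rw [hmk2, hcomp]
    exact ha2x
  · intro h
    have hb : IsAtom ((e₁ ⟨a, (hs a ha).1⟩).val) :=
      atom_transport hM hcl hs hM' hcl' hs' e₁ ha (hs a ha).1
    have hbψ : (e₁ ⟨a, (hs a ha).1⟩).val ≤ ψ x :=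
      ((hψ x).1 _ hb).2 ⟨a, ha, h, rfl⟩
    refine ((hφ (ψ x)).1 a ha).2 ⟨_, hb, hbψ, ?_⟩
    have hmk3 : (⟨(e₁ ⟨a, (hs a ha).1⟩).val, (hs' _ hb).1⟩ : {x : T' // cl' x = x}) =
        e₁ ⟨a, (hs a ha).1⟩ := Subtype.ext rfl
    rw [hmk3, hcomp]

/-- The uniqueness half of the theorem. -/
lemma part2_main (hM : IsMatroidScheme ρ) (hcl : IsClosureFun ρ cl)
    (hM' : IsMatroidScheme ρ') (hcl' : IsClosureFun ρ' cl')
    (hs : ∀ a : T, IsAtom a → cl a = a ∧ ρ a ≠ 0)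
    (hs' : ∀ a : T', IsAtom a → cl' a = a ∧ ρ' a ≠ 0)
    (e : {x : T // cl x = x} ≃o {x : T' // cl' x = x}) :
    ∃ ψ : T ≃o T', ∀ x : T, ρ x = ρ' (ψ x) := by
  obtain ⟨ψ, hψ⟩ := psi_exists hM hcl hs hM' hcl' hs' e
  obtain ⟨φ, hφ⟩ := psi_exists hM' hcl' hs' hM hcl hs e.symm
  have linv : ∀ x, φ (ψ x) = x :=
    psi_inv hM hcl hs hM' hcl' hs' e e.symm (fun f => e.symm_apply_apply f) ψ φ hψ hφ
  have rinv : ∀ y, ψ (φ y) = y :=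
    psi_inv hM' hcl' hs' hM hcl hs e.symm e (fun f => e.apply_symm_apply f) φ ψ hφ hψ
  have hmono : Monotone ψ := psi_mono hM hcl hs hM' hcl' hs' e ψ hψ
  have hmono' : Monotone φ := psi_mono hM' hcl' hs' hM hcl hs e.symm φ hφ
  refine ⟨⟨⟨ψ, φ, linv, rinv⟩, ?_⟩, ?_⟩
  · intro x y
    constructor
    · intro h
      have := hmono' h
      simpa [linv] using this
    · intro h
      exact hmono h
  · intro x
    show ρ x = ρ' (ψ x)
    have h1 : ρ x = ρ (cl x) := ((hcl x).2.1).symm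
    have h2 : ρ (cl x) = ρ' ((e ⟨cl x, cl_idem hcl x⟩).val) :=
      rank_flat_transport hM hcl hs hM' hcl' hs' e ⟨cl x, cl_idem hcl x⟩
    have h3 : cl' (ψ x) = (e ⟨cl x, cl_idem hcl x⟩).val := (hψ x).2
    have h4 : ρ' (ψ x) = ρ' (cl' (ψ x)) := ((hcl' (ψ x)).2.1).symm
    rw [h1, h2, ← h3, ← h4]
end Part2

section GeomRank
variable {L : Type*} [Lattice L] [OrderBot L] [Fintype L] (rk : L → ℕ)
variable (hmono : ∀ ⦃x y : L⦄, x ≤ y → rk x ≤ rk y)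
variable (hcov : ∀ x y : L, x ⋖ y → rk y = rk x + 1)
variable (hatom : ∀ x : L, IsLUB {a : L | IsAtom a ∧ a ≤ x} x)
variable (hsemi : ∀ (x a : L), IsAtom a → ¬ a ≤ x → x ⋖ x ⊔ a)
variable (hbot : rk ⊥ = 0)

include hmono hcov in
lemma rk_strict {x y : L} (h : x < y) : rk x < rk y := by
  obtain ⟨z, hxz, hzy⟩ := exists_covby_le h
  have := hcov x z hxz
  have := hmono hzy
  omega

include hmono hcov hsemi in
/-- Rank of join with an atom increases by at most one. -/
lemma rk_sup_atom_le {x a : L} (ha : IsAtom a) : rk (x ⊔ a) ≤ rk x + 1 := by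
  by_cases h : a ≤ x
  · rw [sup_eq_left.2 h]; omega
  · exact (hcov _ _ (hsemi x a ha h)).le

include hmono hcov hsemi in
lemma rk_sup_atom_eq {x a : L} (ha : IsAtom a) (h : ¬ a ≤ x) :
    rk (x ⊔ a) = rk x + 1 := hcov _ _ (hsemi x a ha h)

include hmono hcov hatom hsemi in
/-- Submodularity auxiliary: for `z ≤ y`, `rk (x ⊔ y) + rk z ≤ rk (x ⊔ z) + rk y`. -/
lemma rk_submod_aux : ∀ (n : ℕ) (x z y : L), z ≤ y → rk y ≤ rk z + n →
    rk (x ⊔ y) + rk z ≤ rk (x ⊔ z) + rk y := by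
  intro n
  induction n with
  | zero =>
    intro x z y hzy hr
    rcases eq_or_lt_of_le hzy with rfl | hlt
    · omega
    · have := rk_strict rk hmono hcov hlt; omega
  | succ n ih =>
    intro x z y hzy hr
    rcases eq_or_lt_of_le hzy with rfl | hlt
    · omega
    · -- pick an atom a ≤ y with ¬ a ≤ z
      have hex : ∃ a : L, IsAtom a ∧ a ≤ y ∧ ¬ a ≤ z := by
        by_contra hno
        push_neg at hno
        have : y ≤ z := (hatom y).2 (fun a haa => hno a haa.1 haa.2)
        exact absurd this (not_le_of_gt hlt)
      obtain ⟨a, ha, hay, haz⟩ := hex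
      have h1 : rk (z ⊔ a) = rk z + 1 := rk_sup_atom_eq rk hmono hcov hsemi ha haz
      have h2 : z ⊔ a ≤ y := sup_le hzy hay
      have h3 := ih x (z ⊔ a) y h2 (by omega)
      have h4 : rk (x ⊔ (z ⊔ a)) ≤ rk (x ⊔ z) + 1 := by
        rw [← sup_assoc]
        exact rk_sup_atom_le rk hmono hcov hsemi ha
      omega

include hmono hcov hatom hsemi in
/-- Submodularity of the rank. -/
lemma rk_submod (x y : L) : rk (x ⊔ y) + rk (x ⊓ y) ≤ rk x + rk y := by
  have := rk_submod_aux rk hmono hcov hatom hsemi (rk y) x (x ⊓ y) y inf_le_right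
    (by omega)
  rwa [sup_inf_self] at this

include hmono hcov hsemi hbot in
/-- The rank of a join of atoms is at most the number of atoms. -/
lemma rk_sup_atoms_le (s : Finset L) (hs : ∀ a ∈ s, IsAtom a) :
    rk (s.sup id) ≤ s.card := by
  classical
  induction s using Finset.induction with
  | empty => simpa using hbot.le
  | @insert a s ha ih =>
    rw [Finset.sup_insert, Finset.card_insert_of_notMem ha]
    have h1 : rk (s.sup id ⊔ a) ≤ rk (s.sup id) + 1 :=
      rk_sup_atom_le rk hmono hcov hsemi (hs a (Finset.mem_insert_self a s))
    have h2 := ih (fun b hb => hs b (Finset.mem_insert_of_mem hb))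
    have : (id a : L) ⊔ s.sup id = s.sup id ⊔ a := by rw [sup_comm]; rfl
    rw [this]
    omega

include hmono hcov hatom hsemi hbot in
/-- Basis extraction: a spanning set of atoms contains a subset of size `rk` with the
same join. -/
lemma exists_basis_subset (B : Finset L) (hB : ∀ a ∈ B, IsAtom a) :
    ∃ B' ⊆ B, B'.sup id = B.sup id ∧ B'.card = rk (B.sup id) := by
  classical
  suffices h : ∀ (n : ℕ) (C : Finset L), C ⊆ B → C.card = rk (C.sup id) →
      rk (B.sup id) ≤ rk (C.sup id) + n →
      ∃ B' ⊆ B, B'.sup id = B.sup id ∧ B'.card = rk (B.sup id) by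
    refine h (rk (B.sup id)) ∅ (Finset.empty_subset B) (by simpa using hbot.symm)
      (by simp [hbot])
  intro n
  induction n with
  | zero =>
    intro C hCB hCcard hle
    refine ⟨C, hCB, ?_, ?_⟩
    · rcases eq_or_lt_of_le (Finset.sup_mono hCB : C.sup id ≤ B.sup id) with h | h
      · exact h
      · exact absurd (rk_strict rk hmono hcov h) (by omega)
    · rcases eq_or_lt_of_le (Finset.sup_mono hCB : C.sup id ≤ B.sup id) with h | h
      · rw [← h]; exact hCcard
      · exact absurd (rk_strict rk hmono hcov h) (by omega)
  | succ n ih =>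
    intro C hCB hCcard hle
    rcases eq_or_lt_of_le (Finset.sup_mono hCB : C.sup id ≤ B.sup id) with h | h
    · exact ⟨C, hCB, h, by rw [← h]; exact hCcard⟩
    · have hex : ∃ a ∈ B, ¬ a ≤ C.sup id := by
        by_contra hno
        push_neg at hno
        exact absurd (Finset.sup_le (fun b hb => hno b hb) : B.sup id ≤ C.sup id)
          (not_le_of_gt h)
      obtain ⟨a, haB, haC⟩ := hex
      have haA : IsAtom a := hB a haB
      have hnotmem : a ∉ C := fun hmem => haC (Finset.le_sup (f := id) hmem)
      have hsup : (insert a C).sup id = C.sup id ⊔ a := by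
        rw [Finset.sup_insert, sup_comm]; rfl
      have hcard : (insert a C).card = C.card + 1 := Finset.card_insert_of_notMem hnotmem
      have hrk : rk ((insert a C).sup id) = rk (C.sup id) + 1 := by
        rw [hsup]; exact rk_sup_atom_eq rk hmono hcov hsemi haA haC
      refine ih (insert a C) (Finset.insert_subset haB hCB) (by omega) (by omega)

include hatom in
/-- Every element is the `Finset.sup` of the atoms below it. -/
lemma sup_atoms_eq (x : L) (s : Finset L) (hs : ∀ a : L, a ∈ s ↔ IsAtom a ∧ a ≤ x) :
    s.sup id = x := by
  apply le_antisymm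
  · exact Finset.sup_le (fun a ha => ((hs a).1 ha).2)
  · exact (hatom x).2 (fun a haa => Finset.le_sup (f := id) ((hs a).2 ⟨haa.1, haa.2⟩))

end GeomRank

section LatUtils
variable {L : Type*} [PartialOrder L]

/-- Build a lattice structure from `IsGeomLatOrder` via choice. -/
@[reducible]
noncomputable def latOf (h : IsGeomLatOrder L) : Lattice L where
  sup := fun x y => (h.2.1 x y).choose
  le_sup_left := fun x y => (h.2.1 x y).choose_spec.1 (Set.mem_insert x {y})
  le_sup_right := fun x y => (h.2.1 x y).choose_spec.1
    (Set.mem_insert_of_mem x rfl)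
  sup_le := fun x y z hxz hyz => (h.2.1 x y).choose_spec.2
    (fun w hw => by
      rcases hw with rfl | hw
      · exact hxz
      · rw [Set.mem_singleton_iff] at hw; subst hw; exact hyz)
  inf := fun x y => (h.2.2.1 x y).choose
  inf_le_left := fun x y => (h.2.2.1 x y).choose_spec.1 (Set.mem_insert x {y})
  inf_le_right := fun x y => (h.2.2.1 x y).choose_spec.1
    (Set.mem_insert_of_mem x rfl)
  le_inf := fun x y z hxy hxz => (h.2.2.1 y z).choose_spec.2
    (fun w hw => by
      rcases hw with rfl | hw
      · exact hxy
      · rw [Set.mem_singleton_iff] at hw; subst hw; exact hxz)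

lemma ordAtom_iff_isAtom [OrderBot L] (a : L) : OrdAtom a ↔ IsAtom a := by
  constructor
  · rintro ⟨b, hb, hcov⟩
    have hb' : b = ⊥ := le_antisymm (hb ⊥) bot_le
    subst hb'
    exact bot_covBy_iff.mp hcov
  · intro ha
    exact ⟨⊥, fun z => bot_le, ha.bot_covBy⟩

lemma atomistic_of_geom [OrderBot L] (hgl : IsGeomLatOrder L) (x : L) :
    IsLUB {a : L | IsAtom a ∧ a ≤ x} x := by
  have h := hgl.2.2.2.1 x
  have : {a : L | OrdAtom a ∧ a ≤ x} = {a : L | IsAtom a ∧ a ≤ x} := by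
    ext a; simp [ordAtom_iff_isAtom]
  rwa [this] at h

end LatUtils

section LatUtils2
variable {L : Type*} [Lattice L] [OrderBot L]

lemma semi_of_geom (hgl : IsGeomLatOrder L)
    (hlub : ∀ x y : L, IsLUB {x, y} (x ⊔ y))
    (x a : L) (ha : IsAtom a) (hax : ¬ a ≤ x) : x ⋖ x ⊔ a := by
  have hglb : IsGLB {a, x} ⊥ := by
    constructor
    · rintro w hw; exact bot_le
    · intro b hb
      have hba : b ≤ a := hb (Set.mem_insert a {x})
      have hbx : b ≤ x := hb (Set.mem_insert_of_mem a rfl)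
      rcases lt_or_eq_of_le hba with h | h
      · rw [ha.2 b h]
      · subst h; exact absurd hbx hax
  have := hgl.2.2.2.2 a x ⊥ (a ⊔ x) hglb (hlub a x) ha.bot_covBy
  rwa [sup_comm] at this

end LatUtils2

section Transfer
variable {P : Type*} [PartialOrder P]

lemma Iic_covBy_iff {z : P} (x y : Set.Iic z) : x ⋖ y ↔ x.val ⋖ y.val := by
  constructor
  · rintro ⟨hlt, hmid⟩
    refine ⟨Subtype.coe_lt_coe.mpr hlt, fun c hc1 hc2 => ?_⟩
    have hcz : c ≤ z := le_trans hc2.le y.2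
    have h1 : x < (⟨c, hcz⟩ : Set.Iic z) := Subtype.coe_lt_coe.mp hc1
    have h2 : (⟨c, hcz⟩ : Set.Iic z) < y := Subtype.coe_lt_coe.mp hc2
    exact hmid h1 h2
  · rintro ⟨hlt, hmid⟩
    exact ⟨Subtype.coe_lt_coe.mp hlt,
      fun c hc1 hc2 => hmid (Subtype.coe_lt_coe.mpr hc1) (Subtype.coe_lt_coe.mpr hc2)⟩

lemma exists_max_ge [Fintype P] (x : P) : ∃ m : P, x ≤ m ∧ IsMax m := by
  obtain ⟨b, hxb, hb⟩ := Finite.exists_le_maximal (a := x) (p := fun _ => True) trivial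
  exact ⟨b, hxb, fun y hy => hb.2 trivial hy⟩

end Transfer

section MasterGeo
variable {P : Type*} [PartialOrder P] [OrderBot P] [Fintype P] {rk : P → ℕ}

lemma JL (hG : IsGeometricPoset P rk) {m : P} (hm : IsMax m)
    (A : Set P) (hA : ∀ a ∈ A, IsAtom a) (hAm : ∀ a ∈ A, a ≤ m) :
    ∃ j : P, j ≤ m ∧ j ∈ mubSet A ∧ (∀ v : P, (∀ a ∈ A, a ≤ v) → v ≤ m → j ≤ v) ∧
      rk j ≤ Nat.card ↥A := by
  classical
  set L := ↥(Set.Iic m)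
  have hL : IsGeomLatOrder L := hG.2.2.2.1 m hm
  letI : Lattice L := latOf hL
  letI : Fintype L := Fintype.ofFinite _
  have hlub : ∀ x y : L, IsLUB {x, y} (x ⊔ y) := fun x y => (hL.2.1 x y).choose_spec
  have hmonoL : ∀ ⦃x y : L⦄, x ≤ y → rk x.val ≤ rk y.val := fun x y h => hG.2.1 h
  have hcovL : ∀ x y : L, x ⋖ y → rk y.val = rk x.val + 1 :=
    fun x y h => hG.2.2.1 _ _ ((Iic_covBy_iff x y).1 h)
  have hsemiL : ∀ (x a : L), IsAtom a → ¬ a ≤ x → x ⋖ x ⊔ a := semi_of_geom hL hlub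
  have hbotL : rk ((⊥ : L) : P) = 0 := hG.1
  set s : Finset L := Finset.univ.filter (fun k : L => k.val ∈ A) with hs
  have hmem : ∀ k : L, k ∈ s ↔ k.val ∈ A := by
    intro k; simp [hs]
  set j : L := s.sup id with hj
  have hUB : ∀ a ∈ A, a ≤ j.val := by
    intro a ha
    have : (⟨a, hAm a ha⟩ : L) ∈ s := (hmem _).2 ha
    exact Subtype.coe_le_coe.mpr (Finset.le_sup (f := id) this)
  have hleast : ∀ v : P, (∀ a ∈ A, a ≤ v) → v ≤ m → j.val ≤ v := by
    intro v hv hvm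
    have : j ≤ ⟨v, hvm⟩ := Finset.sup_le (fun k hk =>
      Subtype.coe_le_coe.mp (hv k.val ((hmem k).1 hk)))
    exact Subtype.coe_le_coe.mpr this
  refine ⟨j.val, j.2, ⟨hUB, fun v hv hvj => le_antisymm hvj (hleast v hv (le_trans hvj j.2))⟩,
    hleast, ?_⟩
  have hsatoms : ∀ k ∈ s, IsAtom k := by
    intro k hk
    exact (Iic_isAtom_iff k).2 (hA k.val ((hmem k).1 hk))
  have h1 : rk (s.sup id).val ≤ s.card :=
    rk_sup_atoms_le (fun k : L => rk k.val) hmonoL hcovL hsemiL hbotL s hsatoms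
  have h2 : s.card ≤ Nat.card ↥A := by
    rw [Nat.card_coe_set_eq, Set.ncard_eq_toFinset_card']
    refine Finset.card_le_card_of_injOn (fun k => k.val) ?_ ?_
    · intro k hk; simp only [Set.mem_toFinset]; exact Set.mem_toFinset.mpr ((hmem k).1 hk)
    · intro k1 _ k2 _ h; exact Subtype.ext h
  exact le_trans h1 h2

lemma SL (hG : IsGeometricPoset P rk) {m : P} (hm : IsMax m)
    (A B : Set P) (hA : ∀ a ∈ A, IsAtom a) (hB : ∀ a ∈ B, IsAtom a)
    (x y w : P) (hx : x ∈ mubSet A) (hy : y ∈ mubSet B) (hxm : x ≤ m) (hym : y ≤ m)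
    (hwx : w ≤ x) (hwy : w ≤ y) :
    ∃ z : P, z ≤ m ∧ z ∈ mubSet (A ∪ B) ∧ x ≤ z ∧ y ≤ z ∧
      (∀ v : P, (∀ a ∈ A ∪ B, a ≤ v) → v ≤ m → z ≤ v) ∧
      rk z + rk w ≤ rk x + rk y := by
  classical
  set L := ↥(Set.Iic m)
  have hL : IsGeomLatOrder L := hG.2.2.2.1 m hm
  letI : Lattice L := latOf hL
  letI : Fintype L := Fintype.ofFinite _
  have hlub : ∀ x y : L, IsLUB {x, y} (x ⊔ y) := fun x y => (hL.2.1 x y).choose_spec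
  have hmonoL : ∀ ⦃x y : L⦄, x ≤ y → rk x.val ≤ rk y.val := fun x y h => hG.2.1 h
  have hcovL : ∀ x y : L, x ⋖ y → rk y.val = rk x.val + 1 :=
    fun x y h => hG.2.2.1 _ _ ((Iic_covBy_iff x y).1 h)
  have hatomL : ∀ x : L, IsLUB {a : L | IsAtom a ∧ a ≤ x} x := atomistic_of_geom hL
  have hsemiL : ∀ (x a : L), IsAtom a → ¬ a ≤ x → x ⋖ x ⊔ a := semi_of_geom hL hlub
  have hAx : ∀ a ∈ A, a ≤ x := hx.1
  have hBy : ∀ a ∈ B, a ≤ y := hy.1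
  set sA : Finset L := Finset.univ.filter (fun k : L => k.val ∈ A) with hsA
  set sB : Finset L := Finset.univ.filter (fun k : L => k.val ∈ B) with hsB
  set sAB : Finset L := Finset.univ.filter (fun k : L => k.val ∈ A ∪ B) with hsAB
  have hmemA : ∀ k : L, k ∈ sA ↔ k.val ∈ A := by intro k; simp [hsA]
  have hmemB : ∀ k : L, k ∈ sB ↔ k.val ∈ B := by intro k; simp [hsB]
  have hmemAB : ∀ k : L, k ∈ sAB ↔ k.val ∈ A ∪ B := by intro k; simp [hsAB]
  have hunion : sAB = sA ∪ sB := by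
    ext k
    simp [hsA, hsB, hsAB, Set.mem_union]
  -- sA.sup id = x
  have hsupAle : sA.sup id ≤ (⟨x, hxm⟩ : L) :=
    Finset.sup_le (fun k hk => Subtype.coe_le_coe.mp (hAx k.val ((hmemA k).1 hk)))
  have hsupA : sA.sup id = (⟨x, hxm⟩ : L) := by
    have hub : ∀ a ∈ A, a ≤ (sA.sup id).val := by
      intro a ha
      have : (⟨a, le_trans (hAx a ha) hxm⟩ : L) ∈ sA := (hmemA _).2 ha
      exact Subtype.coe_le_coe.mpr (Finset.le_sup (f := id) this)
    exact Subtype.ext (hx.2 (sA.sup id).val hub (Subtype.coe_le_coe.mpr hsupAle))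
  have hsupBle : sB.sup id ≤ (⟨y, hym⟩ : L) :=
    Finset.sup_le (fun k hk => Subtype.coe_le_coe.mp (hBy k.val ((hmemB k).1 hk)))
  have hsupB : sB.sup id = (⟨y, hym⟩ : L) := by
    have hub : ∀ a ∈ B, a ≤ (sB.sup id).val := by
      intro a ha
      have : (⟨a, le_trans (hBy a ha) hym⟩ : L) ∈ sB := (hmemB _).2 ha
      exact Subtype.coe_le_coe.mpr (Finset.le_sup (f := id) this)
    exact Subtype.ext (hy.2 (sB.sup id).val hub (Subtype.coe_le_coe.mpr hsupBle))
  set zL : L := sAB.sup id with hzL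
  have hzsup : zL = (⟨x, hxm⟩ : L) ⊔ (⟨y, hym⟩ : L) := by
    rw [hzL, hunion, Finset.sup_union, hsupA, hsupB]
  have hUB : ∀ a ∈ A ∪ B, a ≤ zL.val := by
    intro a ha
    have ham : a ≤ m := by
      rcases ha with h | h
      · exact le_trans (hAx a h) hxm
      · exact le_trans (hBy a h) hym
    have : (⟨a, ham⟩ : L) ∈ sAB := (hmemAB _).2 ha
    exact Subtype.coe_le_coe.mpr (Finset.le_sup (f := id) this)
  have hleast : ∀ v : P, (∀ a ∈ A ∪ B, a ≤ v) → v ≤ m → zL.val ≤ v := by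
    intro v hv hvm
    have : zL ≤ ⟨v, hvm⟩ := Finset.sup_le (fun k hk =>
      Subtype.coe_le_coe.mp (hv k.val ((hmemAB k).1 hk)))
    exact Subtype.coe_le_coe.mpr this
  have hwm : w ≤ m := le_trans hwx hxm
  have hwinf : (⟨w, hwm⟩ : L) ≤ (⟨x, hxm⟩ : L) ⊓ (⟨y, hym⟩ : L) :=
    le_inf (Subtype.coe_le_coe.mp hwx) (Subtype.coe_le_coe.mp hwy)
  have hsub := rk_submod (fun k : L => rk k.val) hmonoL hcovL hatomL hsemiL
    (⟨x, hxm⟩ : L) (⟨y, hym⟩ : L)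
  have hwrk : rk w ≤ rk ((⟨x, hxm⟩ : L) ⊓ (⟨y, hym⟩ : L)).val := hmonoL hwinf
  have hzrk : rk zL.val = rk ((⟨x, hxm⟩ : L) ⊔ (⟨y, hym⟩ : L)).val := by rw [hzsup]
  refine ⟨zL.val, zL.2,
    ⟨hUB, fun v hv hvz => le_antisymm hvz (hleast v hv (le_trans hvz zL.2))⟩,
    ?_, ?_, hleast, ?_⟩
  · have : (⟨x, hxm⟩ : L) ≤ zL := by rw [hzsup]; exact le_sup_left
    exact Subtype.coe_le_coe.mpr this
  · have : (⟨y, hym⟩ : L) ≤ zL := by rw [hzsup]; exact le_sup_right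
    exact Subtype.coe_le_coe.mpr this
  · simp only at hsub
    omega

lemma BL (hG : IsGeometricPoset P rk) {m : P} (hm : IsMax m)
    (B : Set P) (hB : ∀ a ∈ B, IsAtom a) (y : P) (hy : y ∈ mubSet B) (hym : y ≤ m) :
    ∃ A' : Set P, A' ⊆ B ∧ (∀ a ∈ A', IsAtom a) ∧ y ∈ mubSet A' ∧
      Nat.card ↥A' = rk y := by
  classical
  set L := ↥(Set.Iic m)
  have hL : IsGeomLatOrder L := hG.2.2.2.1 m hm
  letI : Lattice L := latOf hL
  letI : Fintype L := Fintype.ofFinite _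
  have hlub : ∀ x y : L, IsLUB {x, y} (x ⊔ y) := fun x y => (hL.2.1 x y).choose_spec
  have hmonoL : ∀ ⦃x y : L⦄, x ≤ y → rk x.val ≤ rk y.val := fun x y h => hG.2.1 h
  have hcovL : ∀ x y : L, x ⋖ y → rk y.val = rk x.val + 1 :=
    fun x y h => hG.2.2.1 _ _ ((Iic_covBy_iff x y).1 h)
  have hatomL : ∀ x : L, IsLUB {a : L | IsAtom a ∧ a ≤ x} x := atomistic_of_geom hL
  have hsemiL : ∀ (x a : L), IsAtom a → ¬ a ≤ x → x ⋖ x ⊔ a := semi_of_geom hL hlub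
  have hbotL : rk ((⊥ : L) : P) = 0 := hG.1
  have hBy : ∀ a ∈ B, a ≤ y := hy.1
  set sB : Finset L := Finset.univ.filter (fun k : L => k.val ∈ B) with hsB
  have hmemB : ∀ k : L, k ∈ sB ↔ k.val ∈ B := by intro k; simp [hsB]
  have hsupBle : sB.sup id ≤ (⟨y, hym⟩ : L) :=
    Finset.sup_le (fun k hk => Subtype.coe_le_coe.mp (hBy k.val ((hmemB k).1 hk)))
  have hsupB : sB.sup id = (⟨y, hym⟩ : L) := by
    have hub : ∀ a ∈ B, a ≤ (sB.sup id).val := by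
      intro a ha
      have : (⟨a, le_trans (hBy a ha) hym⟩ : L) ∈ sB := (hmemB _).2 ha
      exact Subtype.coe_le_coe.mpr (Finset.le_sup (f := id) this)
    exact Subtype.ext (hy.2 (sB.sup id).val hub (Subtype.coe_le_coe.mpr hsupBle))
  have hsatoms : ∀ k ∈ sB, IsAtom k := by
    intro k hk
    exact (Iic_isAtom_iff k).2 (hB k.val ((hmemB k).1 hk))
  obtain ⟨B', hB'sub, hB'sup, hB'card⟩ :=
    exists_basis_subset (fun k : L => rk k.val) hmonoL hcovL hatomL hsemiL hbotL sB hsatoms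
  set A' : Set P := Subtype.val '' (↑B' : Set L) with hA'
  have hA'B : A' ⊆ B := by
    rintro a ⟨k, hk, rfl⟩
    exact (hmemB k).1 (hB'sub hk)
  have hA'atoms : ∀ a ∈ A', IsAtom a := fun a ha => hB a (hA'B ha)
  have hUB : ∀ a ∈ A', a ≤ y := fun a ha => hBy a (hA'B ha)
  have hjeq : (B'.sup id) = (⟨y, hym⟩ : L) := by rw [hB'sup, hsupB]
  refine ⟨A', hA'B, hA'atoms, ⟨hUB, ?_⟩, ?_⟩
  · intro v hv hvy
    have hvm : v ≤ m := le_trans hvy hym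
    have : B'.sup id ≤ (⟨v, hvm⟩ : L) := Finset.sup_le (fun k hk =>
      Subtype.coe_le_coe.mp (hv k.val ⟨k, hk, rfl⟩))
    rw [hjeq] at this
    exact le_antisymm hvy (Subtype.coe_le_coe.mpr this)
  · have h1 : A' = ↑(B'.image Subtype.val) := by
      rw [Finset.coe_image]
    rw [h1, Nat.card_coe_set_eq, Set.ncard_coe_finset,
      Finset.card_image_of_injective _ Subtype.val_injective, hB'card]
    simp only [hsupB]

lemma AL (hG : IsGeometricPoset P rk) (x : P) :
    x ∈ mubSet {a : P | IsAtom a ∧ a ≤ x} := by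
  classical
  obtain ⟨m, hxm, hm⟩ := exists_max_ge x
  set L := ↥(Set.Iic m)
  have hL : IsGeomLatOrder L := hG.2.2.2.1 m hm
  have hatomL : ∀ x : L, IsLUB {a : L | IsAtom a ∧ a ≤ x} x := atomistic_of_geom hL
  refine ⟨fun a ha => ha.2, ?_⟩
  intro v hv hvx
  have hvm : v ≤ m := le_trans hvx hxm
  have hub : (⟨v, hvm⟩ : L) ∈ upperBounds {a : L | IsAtom a ∧ a ≤ ⟨x, hxm⟩} := by
    rintro k ⟨hk1, hk2⟩
    have : IsAtom k.val := (Iic_isAtom_iff k).1 hk1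
    exact Subtype.coe_le_coe.mp (hv k.val ⟨this, Subtype.coe_le_coe.mpr hk2⟩)
  have := (hatomL ⟨x, hxm⟩).2 hub
  exact le_antisymm hvx (Subtype.coe_le_coe.mpr this)

lemma mubSet_unique {A : Set P} {j w m : P} (hj : j ∈ mubSet A)
    (hleast : ∀ v : P, (∀ a ∈ A, a ≤ v) → v ≤ m → j ≤ v)
    (hw : w ∈ mubSet A) (hwm : w ≤ m) : w = j :=
  hw.2 j hj.1 (hleast w hw.1 hwm) |>.symm ▸ (hw.2 j hj.1 (hleast w hw.1 hwm)).symm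

end MasterGeo

section GSdef
variable {P : Type*} [PartialOrder P] [OrderBot P]

/-- The carrier of the constructed matroid scheme: pairs `(A, x)` of a set of atoms
and a minimal upper bound of it. -/
abbrev GS (P : Type*) [PartialOrder P] [OrderBot P] : Type _ :=
  {q : Set P × P // (∀ a ∈ q.1, IsAtom a) ∧ q.2 ∈ mubSet q.1}

instance : OrderBot (GS P) where
  bot := ⟨(∅, ⊥), fun a ha => absurd ha (Set.notMem_empty a),
    ⟨fun t ht => absurd ht (Set.notMem_empty t), fun v _ hv => le_bot_iff.mp hv⟩⟩
  bot_le := fun q => ⟨Set.empty_subset _, bot_le⟩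

lemma GS_le_iff (q r : GS P) : q ≤ r ↔ q.val.1 ⊆ r.val.1 ∧ q.val.2 ≤ r.val.2 := Iff.rfl

lemma GS_UB (q : GS P) {a : P} (ha : a ∈ q.val.1) : a ≤ q.val.2 := q.prop.2.1 a ha

lemma GS_bot_val : ((⊥ : GS P).val) = (∅, ⊥) := rfl

lemma GS_bot_char {q : GS P} (h : q.val.1 = ∅) : q = ⊥ := by
  have h2 : q.val.2 = ⊥ := by
    have := q.prop.2.2 ⊥ (fun t ht => by rw [h] at ht; exact absurd ht (Set.notMem_empty t))
      bot_le
    exact this.symm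
  apply Subtype.ext
  rw [GS_bot_val]
  exact Prod.ext h h2

/-- The atom of `GS P` corresponding to an atom of `P`. -/
def atomT (a : P) (ha : IsAtom a) : GS P :=
  ⟨({a}, a), fun b hb => by rw [Set.mem_singleton_iff] at hb; rw [hb]; exact ha,
    ⟨fun t ht => by rw [Set.mem_singleton_iff] at ht; rw [ht],
     fun v hv hva => le_antisymm hva (hv a rfl)⟩⟩

lemma atomT_le_iff {a : P} (ha : IsAtom a) (q : GS P) :
    atomT a ha ≤ q ↔ a ∈ q.val.1 := by
  constructor
  · intro h
    exact h.1 rfl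
  · intro h
    exact ⟨Set.singleton_subset_iff.mpr h, GS_UB q h⟩

lemma atomT_ne_bot {a : P} (ha : IsAtom a) : atomT a ha ≠ ⊥ := by
  intro h
  have := congrArg (fun q : GS P => q.val.2) h
  exact ha.1 this

lemma isAtom_atomT {a : P} (ha : IsAtom a) : IsAtom (atomT a ha) := by
  refine ⟨atomT_ne_bot ha, fun t ht => ?_⟩
  by_cases hmem : a ∈ t.val.1
  · exfalso
    have h1 : t.val.1 ⊆ {a} := ht.le.1
    have h2 : t.val.1 = {a} := le_antisymm h1 (Set.singleton_subset_iff.mpr hmem)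
    have h3 : t.val.2 = a := by
      have hub : a ≤ t.val.2 := GS_UB t hmem
      have hle : t.val.2 ≤ a := ht.le.2
      exact le_antisymm hle hub
    have : t = atomT a ha := Subtype.ext (Prod.ext h2 h3)
    rw [this] at ht
    exact lt_irrefl _ ht
  · have : t.val.1 = ∅ := by
      rw [Set.eq_empty_iff_forall_notMem]
      intro b hb
      have h5 : b ∈ ({a} : Set P) := ht.le.1 hb
      rw [Set.mem_singleton_iff] at h5
      exact hmem (h5 ▸ hb)
    exact GS_bot_char this

lemma isAtom_GS_iff {t : GS P} : IsAtom t ↔ ∃ (a : P) (ha : IsAtom a), t = atomT a ha := by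
  constructor
  · intro ht
    have hne : t.val.1 ≠ ∅ := by
      intro h
      exact ht.1 (GS_bot_char h)
    obtain ⟨a, ha⟩ := Set.nonempty_iff_ne_empty.mpr hne
    have haP : IsAtom a := t.prop.1 a ha
    have hle : atomT a haP ≤ t := (atomT_le_iff haP t).2 ha
    rcases lt_or_eq_of_le hle with h | h
    · exact absurd (ht.2 _ h) (atomT_ne_bot haP)
    · exact ⟨a, haP, h.symm⟩
  · rintro ⟨a, ha, rfl⟩
    exact isAtom_atomT ha

lemma natRank_GS [Fintype P] (q : GS P) : natRank q = Nat.card ↥(q.val.1) := by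
  apply Nat.card_eq_of_bijective
    (fun s => ⟨s.val.val.2, by
      obtain ⟨a, ha, heq⟩ := isAtom_GS_iff.mp s.prop.1
      have h1 : s.val.val.2 = a := by rw [heq]; rfl
      rw [h1]
      have := s.prop.2.1
      rw [heq] at this
      exact this (by rfl : a ∈ ({a} : Set P))⟩)
  constructor
  · rintro ⟨s, hs⟩ ⟨s', hs'⟩ h
    obtain ⟨a, ha, heq⟩ := isAtom_GS_iff.mp hs.1
    obtain ⟨a', ha', heq'⟩ := isAtom_GS_iff.mp hs'.1
    simp only [Subtype.mk.injEq] at h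
    have h1 : s.val.2 = a := by rw [heq]; rfl
    have h2 : s'.val.2 = a' := by rw [heq']; rfl
    rw [h1, h2] at h
    apply Subtype.ext
    show s = s'
    subst h
    rw [heq, heq']
  · rintro ⟨a, haA⟩
    have haP : IsAtom a := q.prop.1 a haA
    refine ⟨⟨atomT a haP, isAtom_atomT haP, (atomT_le_iff haP q).2 haA⟩, rfl⟩

end GSdef

section GSsimp
variable {P : Type*} [PartialOrder P] [OrderBot P] [Fintype P] {rk : P → ℕ}

noncomputable instance GS.fintype : Fintype (GS P) := Fintype.ofFinite _

/-- Atoms of `GS P` below `q` correspond to atoms of `P` in `q.val.1`. -/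
noncomputable def GS_atomEquiv (q : GS P) :
    {s : GS P // IsAtom s ∧ s ≤ q} ≃ ↥(q.val.1) where
  toFun s := ⟨s.val.val.2, by
    obtain ⟨a, ha, heq⟩ := isAtom_GS_iff.mp s.prop.1
    have h1 : s.val.val.2 = a := by rw [heq]; rfl
    rw [h1]
    have := s.prop.2.1
    rw [heq] at this
    exact this (by rfl : a ∈ ({a} : Set P))⟩
  invFun a := ⟨atomT a.val (q.prop.1 a.val a.2), isAtom_atomT _, (atomT_le_iff _ q).2 a.2⟩
  left_inv s := by
    apply Subtype.ext
    obtain ⟨a, ha, heq⟩ := isAtom_GS_iff.mp s.prop.1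
    have h1 : s.val.val.2 = a := by rw [heq]; rfl
    simp only [h1, heq]
    rfl
  right_inv a := Subtype.ext rfl

/-- An equivalence of types induces an order isomorphism of powerset lattices. -/
def setCongrOrdIso {α β : Type*} (e : α ≃ β) : Set α ≃o Set β where
  toFun s := e '' s
  invFun s := e.symm '' s
  left_inv s := by simp
  right_inv s := by simp
  map_rel_iff' := Set.image_subset_image_iff e.injective

lemma GS_simplicial (hG : IsGeometricPoset P rk) : IsSimplicialPoset (GS P) := by
  intro t
  obtain ⟨m, hxm, hm⟩ := exists_max_ge t.val.2
  set A : Set P := t.val.1 with hA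
  have hAatoms : ∀ a ∈ A, IsAtom a := t.prop.1
  have hAx : ∀ a ∈ A, a ≤ t.val.2 := t.prop.2.1
  -- the "join" function on subsets of A
  have hex : ∀ D : {D : Set P // D ⊆ A}, ∃ j : P, j ≤ m ∧ j ∈ mubSet D.val ∧
      (∀ v : P, (∀ a ∈ D.val, a ≤ v) → v ≤ m → j ≤ v) ∧ rk j ≤ Nat.card ↥D.val :=
    fun D => JL hG hm D.val (fun a ha => hAatoms a (D.2 ha))
      (fun a ha => le_trans (hAx a (D.2 ha)) hxm)
  choose jf hjf1 hjf2 hjf3 _ using hex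
  -- uniqueness of the join
  have huniq : ∀ (D : {D : Set P // D ⊆ A}) (w : P), w ∈ mubSet D.val → w ≤ m → w = jf D :=
    fun D w hw hwm => mubSet_unique (hjf2 D) (hjf3 D) hw hwm
  have hjle : ∀ (D D' : {D : Set P // D ⊆ A}), D.val ⊆ D'.val → jf D ≤ jf D' := by
    intro D D' hsub
    exact hjf3 D (jf D') (fun a ha => (hjf2 D').1 a (hsub ha)) (hjf1 D')
  have hjlex : ∀ D : {D : Set P // D ⊆ A}, jf D ≤ t.val.2 :=
    fun D => hjf3 D t.val.2 (fun a ha => hAx a (D.2 ha)) hxm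
  -- forward and backward maps
  set fwd : Set.Iic t → Set ↥A := fun r => {a : ↥A | a.val ∈ r.val.val.1} with hfwd
  have hbwdmem : ∀ S : Set ↥A, (Subtype.val '' S : Set P) ⊆ A := by
    rintro S b ⟨a, _, rfl⟩; exact a.2
  set bwd : Set ↥A → Set.Iic t := fun S =>
    ⟨⟨(Subtype.val '' S, jf ⟨Subtype.val '' S, hbwdmem S⟩),
      fun a ha => hAatoms a (hbwdmem S ha),
      hjf2 ⟨Subtype.val '' S, hbwdmem S⟩⟩,
      ⟨hbwdmem S, hjlex _⟩⟩ with hbwd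
  -- key: the second component of any element below t is the join of its first component
  have hkey : ∀ r : Set.Iic t, r.val.val.2 = jf ⟨r.val.val.1, r.2.1⟩ := by
    intro r
    exact huniq _ _ r.val.prop.2 (le_trans r.2.2 hxm)
  have hleftinv : ∀ r : Set.Iic t, bwd (fwd r) = r := by
    intro r
    have h1 : (Subtype.val '' (fwd r) : Set P) = r.val.val.1 := by
      ext b
      constructor
      · rintro ⟨a, ha, rfl⟩; exact ha
      · intro hb
        exact ⟨⟨b, r.2.1 hb⟩, hb, rfl⟩
    apply Subtype.ext
    apply Subtype.ext
    refine Prod.ext h1 ?_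
    have h2 : (⟨Subtype.val '' (fwd r), hbwdmem _⟩ : {D : Set P // D ⊆ A}) =
        ⟨r.val.val.1, r.2.1⟩ := Subtype.ext h1
    show jf ⟨Subtype.val '' (fwd r), hbwdmem _⟩ = (r.val.val).2
    rw [h2]
    exact (hkey r).symm
  have hrightinv : ∀ S : Set ↥A, fwd (bwd S) = S := by
    intro S
    ext a
    simp only [hfwd, Set.mem_setOf_eq]
    constructor
    · rintro ⟨b, hb, heq⟩
      have : b = a := Subtype.ext heq
      exact this ▸ hb
    · intro ha
      exact ⟨a, ha, rfl⟩
  have hmaprel : ∀ r r' : Set.Iic t, fwd r ⊆ fwd r' ↔ r ≤ r' := by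
    intro r r'
    constructor
    · intro h
      have h1 : r.val.val.1 ⊆ r'.val.val.1 := by
        intro b hb
        exact h (show (⟨b, r.2.1 hb⟩ : ↥A) ∈ fwd r from hb)
      have h2 : r.val.val.2 ≤ r'.val.val.2 := by
        rw [hkey r, hkey r']
        exact hjle _ _ h1
      exact Subtype.coe_le_coe.mp ⟨h1, h2⟩
    · intro h b hb
      exact h.1 hb
  refine ⟨OrderIso.trans ⟨⟨fwd, bwd, hleftinv, hrightinv⟩, ?_⟩
    (setCongrOrdIso (GS_atomEquiv t).symm)⟩
  intro r r'
  exact hmaprel r r'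

end GSsimp

section Part1Main
variable {P : Type*} [PartialOrder P] [OrderBot P] [Fintype P] {rk : P → ℕ}

lemma rk_strict_P (hG : IsGeometricPoset P rk) {x y : P} (hle : x ≤ y)
    (heq : rk x = rk y) : x = y := by
  rcases lt_or_eq_of_le hle with h | h
  · exact absurd heq (Nat.ne_of_lt (rk_strictMono hG.2.1 hG.2.2.1 h))
  · exact h

lemma part1_main (hG : IsGeometricPoset P rk) :
    ∃ (ρ : GS P → ℕ) (cl : GS P → GS P),
      IsMatroidScheme ρ ∧ IsClosureFun ρ cl ∧
      (∀ a : GS P, IsAtom a → cl a = a ∧ ρ a ≠ 0) ∧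
      ∃ e : P ≃o {x : GS P // cl x = x}, ∀ p : P, rk p = ρ (e p).val := by
  classical
  set ρ : GS P → ℕ := fun q => rk q.val.2 with hρ
  set cl : GS P → GS P := fun q =>
    ⟨({a : P | IsAtom a ∧ a ≤ q.val.2}, q.val.2), fun a ha => ha.1, AL hG q.val.2⟩ with hcl
  have hatomrk : ∀ a : P, IsAtom a → rk a = 1 := by
    intro a ha
    have := hG.2.2.1 ⊥ a ha.bot_covBy
    rw [hG.1] at this
    omega
  refine ⟨ρ, cl, ⟨GS_simplicial hG, ?_, ?_, ?_, ?_, ?_⟩, ?_, ?_, ?_⟩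
  · -- M1
    intro q
    obtain ⟨m, hqm, hm⟩ := exists_max_ge q.val.2
    obtain ⟨j, hjm, hjmub, hjleast, hjrank⟩ := JL hG hm q.val.1 q.prop.1
      (fun a ha => le_trans (GS_UB q ha) hqm)
    have : q.val.2 = j := mubSet_unique hjmub hjleast q.prop.2 hqm
    rw [natRank_GS]
    calc ρ q = rk j := by rw [hρ]; simp only [this]
    _ ≤ Nat.card ↥(q.val.1) := hjrank
  · -- M2
    intro x y h
    exact hG.2.1 h.2
  · -- M3
    intro x y u l hu hl
    obtain ⟨m, hum, hm⟩ := exists_max_ge u.val.2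
    have hxm : x.val.2 ≤ m := le_trans hu.1.2 hum
    have hym : y.val.2 ≤ m := le_trans hu.2.1.2 hum
    obtain ⟨z, hzm, hzmub, hxz, hyz, hzleast, hzrank⟩ := SL hG hm x.val.1 y.val.1
      x.prop.1 y.prop.1 x.val.2 y.val.2 l.val.2 x.prop.2 y.prop.2 hxm hym
      hl.1.2 hl.2.1.2
    set tz : GS P := ⟨(x.val.1 ∪ y.val.1, z),
      fun a ha => ha.elim (x.prop.1 a) (y.prop.1 a), hzmub⟩ with htz
    have htzx : x ≤ tz := ⟨Set.subset_union_left, hxz⟩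
    have htzy : y ≤ tz := ⟨Set.subset_union_right, hyz⟩
    have htzu : tz ≤ u := by
      refine ⟨Set.union_subset hu.1.1 hu.2.1.1, ?_⟩
      refine hzleast u.val.2 (fun a ha => GS_UB u ?_) hum
      exact Set.union_subset hu.1.1 hu.2.1.1 ha
    have : tz = u := hu.2.2 tz htzx htzy htzu
    have hρu : ρ u = rk z := by rw [← this]
    rw [hρu]
    exact hzrank
  · -- M4
    intro x y l hl hrk
    have hw : l.val.2 = x.val.2 := rk_strict_P hG hl.1.2 (by rw [hρ] at hrk; exact hrk.symm)
    have hxy2 : x.val.2 ≤ y.val.2 := hw ▸ hl.2.1.2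
    have hymub : y.val.2 ∈ mubSet (x.val.1 ∪ y.val.1) := by
      constructor
      · intro a ha
        rcases ha with h | h
        · exact le_trans (GS_UB x h) hxy2
        · exact GS_UB y h
      · intro v hv hvy
        exact y.prop.2.2 v (fun t ht => hv t (Or.inr ht)) hvy
    set tz : GS P := ⟨(x.val.1 ∪ y.val.1, y.val.2),
      fun a ha => ha.elim (x.prop.1 a) (y.prop.1 a), hymub⟩ with htz
    have htzx : x ≤ tz := ⟨Set.subset_union_left, hxy2⟩
    have htzy : y ≤ tz := ⟨Set.subset_union_right, le_refl _⟩
    obtain ⟨u, hu, _⟩ := exists_mub_le htzx htzy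
    exact ⟨u, hu⟩
  · -- M5
    intro x y hrk
    obtain ⟨m, hym, hm⟩ := exists_max_ge y.val.2
    obtain ⟨A', hA'sub, hA'atoms, hA'mub, hA'card⟩ := BL hG hm y.val.1 y.prop.1
      y.val.2 y.prop.2 hym
    obtain ⟨a, haA', hax, w, hxw, haw⟩ := hG.2.2.2.2 x.val.2 A' hA'atoms
      y.val.2 hA'mub hrk hA'card.symm
    have haP : IsAtom a := hA'atoms a haA'
    have hamem : a ∈ y.val.1 := hA'sub haA'
    refine ⟨atomT a haP, isAtom_atomT haP, (atomT_le_iff haP y).2 hamem, ?_, ?_⟩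
    · intro h
      exact hax (GS_UB x ((atomT_le_iff haP x).1 h))
    · obtain ⟨m2, hwm2, hm2⟩ := exists_max_ge w
      have hamub : a ∈ mubSet ({a} : Set P) := (atomT a haP).prop.2
      obtain ⟨z, hzm, hzmub, hxz, haz, hzleast, _⟩ := SL hG hm2 x.val.1 {a}
        x.prop.1 (fun b hb => by rw [Set.mem_singleton_iff] at hb; rw [hb]; exact haP)
        x.val.2 a ⊥ x.prop.2 hamub (le_trans hxw hwm2) (le_trans haw hwm2)
        bot_le bot_le
      set tz : GS P := ⟨(x.val.1 ∪ {a}, z),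
        fun b hb => hb.elim (x.prop.1 b)
          (fun h => by rw [Set.mem_singleton_iff] at h; rw [h]; exact haP), hzmub⟩ with htz
      have htzx : x ≤ tz := ⟨Set.subset_union_left, hxz⟩
      have htza : atomT a haP ≤ tz :=
        (atomT_le_iff haP tz).2 (Or.inr rfl)
      obtain ⟨u, hu, _⟩ := exists_mub_le htzx htza
      exact ⟨u, hu⟩
  · -- closure function
    intro q
    refine ⟨⟨fun a ha => ⟨q.prop.1 a ha, GS_UB q ha⟩, le_refl _⟩, rfl, ?_⟩
    intro r hqr hρr
    have h2 : r.val.2 = q.val.2 := (rk_strict_P hG hqr.2 hρr.symm).symm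
    refine ⟨fun a ha => ⟨r.prop.1 a ha, h2 ▸ GS_UB r ha⟩, le_of_eq h2⟩
  · -- atoms are closed with nonzero rank
    intro t ht
    obtain ⟨a, ha, rfl⟩ := isAtom_GS_iff.mp ht
    constructor
    · apply Subtype.ext
      apply Prod.ext
      · show {b : P | IsAtom b ∧ b ≤ a} = {a}
        ext b
        simp only [Set.mem_setOf_eq, Set.mem_singleton_iff]
        constructor
        · rintro ⟨hb, hba⟩
          rcases lt_or_eq_of_le hba with h | h
          · exact absurd (ha.2 b h) hb.1
          · exact h
        · rintro rfl
          exact ⟨ha, le_refl _⟩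
      · rfl
    · show rk a ≠ 0
      rw [hatomrk a ha]
      omega
  · -- the order isomorphism with the flats
    refine ⟨⟨⟨fun p => ⟨⟨({b : P | IsAtom b ∧ b ≤ p}, p), fun b hb => hb.1, AL hG p⟩, rfl⟩,
      fun f => f.val.val.2, fun p => rfl, ?_⟩, ?_⟩, fun p => rfl⟩
    · intro f
      apply Subtype.ext
      apply Subtype.ext
      exact congrArg Subtype.val f.prop
    · intro p p2
      constructor
      · intro h
        exact h.2
      · intro h
        exact ⟨fun b hb => ⟨hb.1, le_trans hb.2 h⟩, h⟩

end Part1Main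

/-- Theorem 9.7: every geometric poset is isomorphic, as a ranked poset, to the
poset of flats of a simple matroid scheme, and two simple matroid schemes with
isomorphic posets of flats are isomorphic as matroid schemes. -/
theorem statement16 :
    (∀ (P : Type) [PartialOrder P] [OrderBot P] [Fintype P], ∀ rk : P → ℕ,
      IsGeometricPoset P rk →
      ∃ (T : Type) (po : PartialOrder T) (ob : OrderBot T) (ft : Fintype T),
        letI := po
        letI := ob
        letI := ft
        ∃ (ρ : T → ℕ) (cl : T → T),
          IsMatroidScheme ρ ∧ IsClosureFun ρ cl ∧
          (∀ a : T, IsAtom a → cl a = a ∧ ρ a ≠ 0) ∧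
          ∃ e : P ≃o {x : T // cl x = x}, ∀ p : P, rk p = ρ (e p).val) ∧
    (∀ (T T' : Type) [PartialOrder T] [OrderBot T] [Fintype T]
        [PartialOrder T'] [OrderBot T'] [Fintype T'],
      ∀ (ρ : T → ℕ) (ρ' : T' → ℕ) (cl : T → T) (cl' : T' → T'),
      IsMatroidScheme ρ → IsMatroidScheme ρ' →
      IsClosureFun ρ cl → IsClosureFun ρ' cl' →
      (∀ a : T, IsAtom a → cl a = a ∧ ρ a ≠ 0) →
      (∀ a : T', IsAtom a → cl' a = a ∧ ρ' a ≠ 0) →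
      Nonempty ({x : T // cl x = x} ≃o {x : T' // cl' x = x}) →
      ∃ ψ : T ≃o T', ∀ x : T, ρ x = ρ' (ψ x)) := by
  constructor
  · intro P _ _ _ rk hG
    exact ⟨GS P, inferInstance, inferInstance, GS.fintype, part1_main hG⟩
  · intro T T' _ _ _ _ _ _ ρ ρ' cl cl' hM hM' hcl hcl' hs hs' he
    obtain ⟨e⟩ := he
    exact part2_main hM hcl hM' hcl' hs hs' e
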